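/- Let k > 0 be a real constant. Then every solution x of the DEPCAG x″(t) + k·x(γ(t)) = 0, t ≥ τ (i.e., every continuously differentiable x : [τ, ∞) → ℝ such that for every j and every t ∈ (t_j, t_{j+1}), x′ is differentiable at t with x″(t) = −k·x(ζ_j)), is oscillatory. -/

import Mathlib

open MeasureTheory Set Filter

/-- Concatenate antitonicity on consecutive intervals `[t j, t (j+1)]` into
antitonicity on `[t J, ∞)`. -/
lemma antitoneOn_concat16 (t : ℕ → ℝ) (ht : Monotone t)
    (ht_top : Tendsto t atTop atTop) (f : ℝ → ℝ) (J : ℕ)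
    (h : ∀ j, J ≤ j → AntitoneOn f (Icc (t j) (t (j+1)))) :
    AntitoneOn f (Ici (t J)) := by
  have key : ∀ n, AntitoneOn f (Icc (t J) (t (J+n))) := by
    intro n
    induction n with
    | zero =>
      intro u hu v hv huv
      simp only [Nat.add_zero] at hu hv
      have hu' : u = t J := le_antisymm hu.2 hu.1
      have hv' : v = t J := le_antisymm hv.2 hv.1
      rw [hu', hv']
    | succ n ih =>
      intro u hu v hv huv
      have hJn1 : t (J + (n+1)) = t ((J+n)+1) := by ring_nf
      by_cases hv' : v ≤ t (J+n)
      · exact ih ⟨hu.1, huv.trans hv'⟩ ⟨hv.1, hv'⟩ huv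
      · push_neg at hv'
        have h2 := h (J+n) (Nat.le_add_right _ _)
        have hvmem : v ∈ Icc (t (J+n)) (t ((J+n)+1)) :=
          ⟨hv'.le, by rw [← hJn1]; exact hv.2⟩
        by_cases hu' : u ≤ t (J+n)
        · have step1 : f v ≤ f (t (J+n)) :=
            h2 ⟨le_refl _, ht (Nat.le_succ _)⟩ hvmem hv'.le
          have step2 : f (t (J+n)) ≤ f u :=
            ih ⟨hu.1, hu'⟩ ⟨ht (Nat.le_add_right _ _), le_refl _⟩ hu'
          exact step1.trans step2
        · push_neg at hu'
          exact h2 ⟨hu'.le, huv.trans hvmem.2⟩ hvmem huv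
  intro u hu v hv huv
  obtain ⟨m, hm⟩ := (tendsto_atTop.mp ht_top v).and (eventually_ge_atTop J) |>.exists
  have hJm : J + (m - J) = m := Nat.add_sub_cancel' hm.2
  have := key (m - J)
  rw [hJm] at this
  exact this ⟨hu, huv.trans hm.1⟩ ⟨hv, hm.1⟩ huv

/-- Key lemma: a solution cannot be eventually positive. -/
lemma key16 (t ζ : ℕ → ℝ) (ht_mono : StrictMono t)
    (ht_top : Tendsto t atTop atTop)
    (hζ : ∀ k : ℕ, ζ k ∈ Icc (t k) (t (k+1)))
    (c : ℝ) (hc : 0 < c)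
    (x x' : ℝ → ℝ)
    (hx_deriv : ∀ s ∈ Ici (t 0), HasDerivAt x (x' s) s)
    (hx'_cont : ContinuousOn x' (Ici (t 0)))
    (hE : ∀ j : ℕ, ∀ s ∈ Ioo (t j) (t (j+1)),
      HasDerivAt x' (-(c * x (ζ j))) s)
    (T : ℝ) (hT0 : t 0 ≤ T) (hpos : ∀ s, T ≤ s → 0 < x s) : False := by
  obtain ⟨J, hJ⟩ := (tendsto_atTop.mp ht_top T).exists
  have hmono := ht_mono.monotone
  have h0J : t 0 ≤ t J := hmono (Nat.zero_le J)
  have hIci0 : ∀ s, t J ≤ s → t 0 ≤ s := fun s hs => h0J.trans hs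
  have hIccsub : ∀ j : ℕ, Icc (t j) (t (j+1)) ⊆ Ici (t 0) :=
    fun j s hs => (hmono (Nat.zero_le j)).trans hs.1
  have hζJ : ∀ j, J ≤ j → t J ≤ ζ j := fun j hj => (hmono hj).trans (hζ j).1
  have hζpos : ∀ j, J ≤ j → 0 < x (ζ j) :=
    fun j hj => hpos _ (hJ.trans (hζJ j hj))
  -- Step A : x' is antitone on [t J, ∞)
  have hA : AntitoneOn x' (Ici (t J)) := by
    apply antitoneOn_concat16 t hmono ht_top x' J
    intro j hj
    apply antitoneOn_of_deriv_nonpos (convex_Icc _ _) (hx'_cont.mono (hIccsub j))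
    · rw [interior_Icc]
      exact fun s hs => (hE j s hs).differentiableAt.differentiableWithinAt
    · rw [interior_Icc]
      intro s hs
      rw [(hE j s hs).deriv]
      have := hζpos j hj
      nlinarith
  -- Step B : x' is nonnegative on [t J, ∞)
  have hB : ∀ s, t J ≤ s → 0 ≤ x' s := by
    intro s0 hs0
    by_contra hneg
    push_neg at hneg
    set δ := -x' s0 with hδ
    have hδpos : 0 < δ := by simp only [hδ]; linarith
    have hxc : ContinuousOn x (Ici (t 0)) :=
      fun s hs => (hx_deriv s hs).continuousAt.continuousWithinAt
    have hg : AntitoneOn (fun s => x s + δ * s) (Ici s0) := by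
      apply antitoneOn_of_deriv_nonpos (convex_Ici _)
      · have : ContinuousOn (fun s => x s + δ * s) (Ici s0) :=
          (hxc.mono (fun s hs => (hIci0 s0 hs0).trans hs)).add
            ((continuous_const.mul continuous_id).continuousOn)
        exact this
      · rw [interior_Ici]
        intro s hs
        have hd : HasDerivAt (fun s => x s + δ * s) (x' s + δ * 1) s :=
          (hx_deriv s (hIci0 s (hs0.trans hs.le))).add ((hasDerivAt_id s).const_mul δ)
        exact hd.differentiableAt.differentiableWithinAt
      · rw [interior_Ici]
        intro s hs
        have hd : HasDerivAt (fun s => x s + δ * s) (x' s + δ * 1) s :=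
          (hx_deriv s (hIci0 s (hs0.trans hs.le))).add ((hasDerivAt_id s).const_mul δ)
        rw [hd.deriv]
        have hx's : x' s ≤ x' s0 := hA hs0 (hs0.trans hs.le) hs.le
        simp only [hδ] at hx's ⊢
        linarith
    set s1 := s0 + x s0 / δ + 1 with hs1
    have hxs0 : 0 < x s0 := hpos s0 (hJ.trans hs0)
    have hs1gt : s0 ≤ s1 := by
      have : 0 < x s0 / δ := div_pos hxs0 hδpos
      simp only [hs1]; linarith
    have hgle := hg (self_mem_Ici) (mem_Ici.mpr hs1gt) hs1gt
    simp only at hgle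
    have hxs1 : 0 < x s1 := hpos s1 ((hJ.trans hs0).trans hs1gt)
    have hdiv : δ * (x s0 / δ) = x s0 := mul_div_cancel₀ _ (ne_of_gt hδpos)
    simp only [hs1] at hgle hxs1
    nlinarith
  -- Step C : x is monotone on [t J, ∞), hence x ≥ x (t J) there
  have hxc : ContinuousOn x (Ici (t 0)) :=
    fun s hs => (hx_deriv s hs).continuousAt.continuousWithinAt
  have hC : MonotoneOn x (Ici (t J)) := by
    apply monotoneOn_of_deriv_nonneg (convex_Ici _) (hxc.mono (fun s hs => hIci0 s hs))
    · rw [interior_Ici]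
      exact fun s hs =>
        (hx_deriv s (hIci0 s hs.le)).differentiableAt.differentiableWithinAt
    · rw [interior_Ici]
      intro s hs
      rw [(hx_deriv s (hIci0 s hs.le)).deriv]
      exact hB s hs.le
  set m := x (t J) with hm
  have hmpos : 0 < m := hpos _ hJ
  have hζm : ∀ j, J ≤ j → m ≤ x (ζ j) :=
    fun j hj => hC self_mem_Ici (mem_Ici.mpr (hζJ j hj)) (hζJ j hj)
  -- Step D : x' s + c*m*s is antitone on [t J, ∞)
  have hD : AntitoneOn (fun s => x' s + c * m * s) (Ici (t J)) := by
    apply antitoneOn_concat16 t hmono ht_top _ J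
    intro j hj
    have hcont : ContinuousOn (fun s => x' s + c * m * s) (Icc (t j) (t (j+1))) :=
      (hx'_cont.mono (hIccsub j)).add ((continuous_const.mul continuous_id).continuousOn)
    apply antitoneOn_of_deriv_nonpos (convex_Icc _ _) hcont
    · rw [interior_Icc]
      intro s hs
      have hd : HasDerivAt (fun s => x' s + c * m * s) (-(c * x (ζ j)) + c * m * 1) s :=
        (hE j s hs).add ((hasDerivAt_id s).const_mul (c * m))
      exact hd.differentiableAt.differentiableWithinAt
    · rw [interior_Icc]
      intro s hs
      have hd : HasDerivAt (fun s => x' s + c * m * s) (-(c * x (ζ j)) + c * m * 1) s :=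
        (hE j s hs).add ((hasDerivAt_id s).const_mul (c * m))
      rw [hd.deriv]
      have := hζm j hj
      nlinarith
  -- Conclude a contradiction
  set s2 := t J + x' (t J) / (c * m) + 1 with hs2
  have hcm : 0 < c * m := mul_pos hc hmpos
  have hx'J : 0 ≤ x' (t J) := hB _ le_rfl
  have hs2ge : t J ≤ s2 := by
    have : 0 ≤ x' (t J) / (c * m) := div_nonneg hx'J hcm.le
    simp only [hs2]; linarith
  have hDle := hD self_mem_Ici (mem_Ici.mpr hs2ge) hs2ge
  simp only at hDle
  have hdiv : c * m * (x' (t J) / (c * m)) = x' (t J) :=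
    mul_div_cancel₀ _ (ne_of_gt hcm)
  have hx's2 : 0 ≤ x' s2 := hB s2 hs2ge
  simp only [hs2] at hDle hx's2
  nlinarith

theorem stmt16
    (t ζ : ℕ → ℝ) (ht_mono : StrictMono t)
    (ht_top : Tendsto t atTop atTop)
    (hζ : ∀ k : ℕ, ζ k ∈ Icc (t k) (t (k+1)))
    (c : ℝ) (hc : 0 < c)
    (x x' : ℝ → ℝ)
    (hx_deriv : ∀ s ∈ Ici (t 0), HasDerivAt x (x' s) s)
    (hx'_cont : ContinuousOn x' (Ici (t 0)))
    (hE : ∀ j : ℕ, ∀ s ∈ Ioo (t j) (t (j+1)),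
      HasDerivAt x' (-(c * x (ζ j))) s) :
    ∃ a b : ℕ → ℝ, Tendsto a atTop atTop ∧ Tendsto b atTop atTop ∧
      ∀ n : ℕ, x (a n) ≤ 0 ∧ 0 ≤ x (b n) := by
  -- x is not eventually positive
  have hkey : ∀ n : ℕ, ∃ s, (n : ℝ) ≤ s ∧ x s ≤ 0 := by
    intro n
    by_contra hcon
    push_neg at hcon
    refine key16 t ζ ht_mono ht_top hζ c hc x x' hx_deriv hx'_cont hE
      (max n (t 0)) (le_max_right _ _) ?_
    intro s hs
    exact hcon s ((le_max_left _ _).trans hs)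
  -- -x satisfies the same hypotheses
  have hkey' : ∀ n : ℕ, ∃ s, (n : ℝ) ≤ s ∧ 0 ≤ x s := by
    intro n
    by_contra hcon
    push_neg at hcon
    refine key16 t ζ ht_mono ht_top hζ c hc (fun s => -x s) (fun s => -x' s)
      (fun s hs => (hx_deriv s hs).neg) hx'_cont.neg ?_
      (max n (t 0)) (le_max_right _ _) ?_
    · intro j s hs
      have := (hE j s hs).neg
      simp only [neg_neg] at this ⊢
      rw [mul_neg, neg_neg]
      exact this
    · intro s hs
      simp only [neg_pos]
      exact hcon s ((le_max_left _ _).trans hs)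
  choose a ha1 ha2 using hkey
  choose b hb1 hb2 using hkey'
  refine ⟨a, b, ?_, ?_, fun n => ⟨ha2 n, hb2 n⟩⟩
  · exact tendsto_atTop_mono ha1 tendsto_natCast_atTop_atTop
  · exact tendsto_atTop_mono hb1 tendsto_natCast_atTop_atTop
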